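/- With g₀ⁿ as above, for 1 ≤ i < j ≤ n−6 the map ψ¹_{i,j} with ψ¹_{i,j}(Y_i, Y_j) = X₆ (zero otherwise), and for j ∈ {2,3,4} and 1 ≤ i ≤ n−6 the maps ψ_i^j with ψ_i^j(Y_i, X_l) = X_{l+j} for 2 ≤ l ≤ 6−j (zero otherwise), are 2-cocycles in Z²(g₀ⁿ, g₀ⁿ); moreover g₀ⁿ + φ_{1,1} + φ_{3,2} + ψ₂³ + Σ_{t=2}^{m−3} ψ¹_{2t−1,2t} (for n = 2m, m ≥ 5) satisfies the Jacobi identity, i.e. defines a Lie algebra law. -/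
import Mathlib

set_option maxHeartbeats 4000000


private lemma span_zero' {g : Type*} [AddCommGroup g] [Module ℂ g] {s : Set g} (F : g → g)
    (hadd : ∀ u v, F (u + v) = F u + F v) (hsmul : ∀ (c : ℂ) u, F (c • u) = c • F u)
    (h : ∀ v ∈ s, F v = 0) : ∀ v ∈ Submodule.span ℂ s, F v = 0 := by
  have h0 : F 0 = 0 := by have := hsmul 0 0; simpa using this
  intro v hv
  induction hv using Submodule.span_induction with
  | mem u hu => exact h u hu
  | zero => exact h0
  | add u w _ _ hu hw => rw [hadd, hu, hw, add_zero]
  | smul c u _ hu => rw [hsmul, hu, smul_zero]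

private lemma tri_aux' {g : Type*} [AddCommGroup g] [Module ℂ g] {s : Set g}
    (hs : Submodule.span ℂ s = ⊤) (T : g → g → g → g)
    (hxa : ∀ x x' y z, T (x + x') y z = T x y z + T x' y z)
    (hxs : ∀ (c : ℂ) x y z, T (c • x) y z = c • T x y z)
    (hya : ∀ x y y' z, T x (y + y') z = T x y z + T x y' z)
    (hys : ∀ (c : ℂ) x y z, T x (c • y) z = c • T x y z)
    (hza : ∀ x y z z', T x y (z + z') = T x y z + T x y z')
    (hzs : ∀ (c : ℂ) x y z, T x y (c • z) = c • T x y z)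
    (hb : ∀ x ∈ s, ∀ y ∈ s, ∀ z ∈ s, T x y z = 0) :
    ∀ x y z, T x y z = 0 := by
  have hx0 : ∀ y z, T 0 y z = 0 := by
    intro y z; have := hxs 0 0 y z; simpa using this
  have hy0 : ∀ x z, T x 0 z = 0 := by
    intro x z; have := hys 0 x 0 z; simpa using this
  have hz0 : ∀ x y, T x y 0 = 0 := by
    intro x y; have := hzs 0 x y 0; simpa using this
  intro x y z
  have hx : x ∈ Submodule.span ℂ s := hs ▸ Submodule.mem_top
  induction hx using Submodule.span_induction with
  | zero => exact hx0 y z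
  | add u v _ _ hu hv => rw [hxa, hu, hv, add_zero]
  | smul c u _ hu => rw [hxs, hu, smul_zero]
  | mem u hu =>
    have hy : y ∈ Submodule.span ℂ s := hs ▸ Submodule.mem_top
    induction hy using Submodule.span_induction with
    | zero => exact hy0 u z
    | add v w _ _ hv hw => rw [hya, hv, hw, add_zero]
    | smul c v _ hv => rw [hys, hv, smul_zero]
    | mem v hv =>
      have hz : z ∈ Submodule.span ℂ s := hs ▸ Submodule.mem_top
      induction hz using Submodule.span_induction with
      | zero => exact hz0 u v
      | add w w' _ _ hw hw' => rw [hza, hw, hw', add_zero]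
      | smul c w _ hw => rw [hzs, hw, smul_zero]
      | mem w hw => exact hb u hu v hv w hw


private lemma partA (n : ℕ) (hn : 7 ≤ n) (g : Type*) [LieRing g] [LieAlgebra ℂ g]
    (e : ℕ → g)
    (hspan : Submodule.span ℂ (Set.range (fun i : Fin n => e (i.1 + 1))) = ⊤)
    (hbr : ∀ j, 2 ≤ j → j ≤ 5 → ⁅e 1, e j⁆ = e (j + 1))
    (hbr0 : ∀ i j, 1 ≤ i → i < j → j ≤ n → ¬(i = 1 ∧ 2 ≤ j ∧ j ≤ 5) → ⁅e i, e j⁆ = 0) :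
    (∀ i j, 1 ≤ i → i < j → j ≤ n - 6 → ∀ ψ : g →ₗ[ℂ] g →ₗ[ℂ] g,
      (∀ x : g, ψ x x = 0) →
      ψ (e (6 + i)) (e (6 + j)) = e 6 →
      (∀ a b, 1 ≤ a → 1 ≤ b → a ≤ n → b ≤ n →
        ¬((a = 6 + i ∧ b = 6 + j) ∨ (a = 6 + j ∧ b = 6 + i)) →
        ψ (e a) (e b) = 0) →
      ∀ x y z : g,
        ⁅x, ψ y z⁆ + ⁅z, ψ x y⁆ + ⁅y, ψ z x⁆ +
          ψ x ⁅y, z⁆ + ψ z ⁅x, y⁆ + ψ y ⁅z, x⁆ = 0) := by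
  have hsk : ∀ u v : g, ⁅u, v⁆ = -⁅v, u⁆ := fun u v => (lie_skew u v).symm
  have hL0 : ∀ a b, 1 ≤ a → a ≤ n → 1 ≤ b → b ≤ n → ¬(a = 1 ∧ 2 ≤ b ∧ b ≤ 5) →
      ¬(b = 1 ∧ 2 ≤ a ∧ a ≤ 5) → ⁅e a, e b⁆ = 0 := by
    intro a b ha1 han hb1 hbn hab hba
    rcases lt_trichotomy a b with h | h | h
    · exact hbr0 a b ha1 h hbn hab
    · rw [h]; exact lie_self _
    · rw [hsk (e a) (e b), hbr0 b a hb1 h han hba, neg_zero]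
  have Lspan : ∀ b c, 1 ≤ b → b ≤ n → 1 ≤ c → c ≤ n →
      ⁅e b, e c⁆ ∈ Submodule.span ℂ {v : g | ∃ s, 3 ≤ s ∧ s ≤ 6 ∧ v = e s} := by
    intro b c hb1 hbn hc1 hcn
    by_cases h1 : b = 1 ∧ 2 ≤ c ∧ c ≤ 5
    · obtain ⟨rfl, hc2, hc5⟩ := h1
      rw [hbr c hc2 hc5]
      exact Submodule.subset_span ⟨c + 1, by omega, by omega, rfl⟩
    · by_cases h2 : c = 1 ∧ 2 ≤ b ∧ b ≤ 5
      · obtain ⟨rfl, hb2, hb5⟩ := h2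
        rw [hsk (e b) (e 1), hbr b hb2 hb5]
        exact Submodule.neg_mem _ (Submodule.subset_span ⟨b + 1, by omega, by omega, rfl⟩)
      · rw [hL0 b c hb1 hbn hc1 hcn h1 h2]; exact Submodule.zero_mem _
  intro i j hi hij hjn ψ halt hval hzero
  have hanti : ∀ u v, ψ u v = -ψ v u := by
    intro u v
    have h := halt (u + v)
    simp only [map_add, LinearMap.add_apply, halt, zero_add, add_zero] at h
    have h2 : ψ u v + ψ v u = 0 := by rw [← h]; abel
    exact eq_neg_of_add_eq_zero_left h2
  have hΨspan : ∀ b c, 1 ≤ b → b ≤ n → 1 ≤ c → c ≤ n →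
      ψ (e b) (e c) ∈ Submodule.span ℂ ({e 6} : Set g) := by
    intro b c hb1 hbn hc1 hcn
    by_cases h1 : b = 6 + i ∧ c = 6 + j
    · obtain ⟨rfl, rfl⟩ := h1
      rw [hval]
      exact Submodule.subset_span rfl
    · by_cases h2 : b = 6 + j ∧ c = 6 + i
      · obtain ⟨rfl, rfl⟩ := h2
        rw [hanti, hval]
        exact Submodule.neg_mem _ (Submodule.subset_span rfl)
      · rw [hzero b c hb1 hc1 hbn hcn (by tauto)]; exact Submodule.zero_mem _
  have hlie6 : ∀ a, 1 ≤ a → a ≤ n → ∀ v ∈ Submodule.span ℂ ({e 6} : Set g),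
      ⁅e a, v⁆ = 0 := by
    intro a ha1 han
    refine span_zero' (fun v => ⁅e a, v⁆) (fun u v => lie_add _ _ _)
      (fun c u => lie_smul _ _ _) ?_
    intro v hv
    rw [Set.mem_singleton_iff] at hv; subst hv
    exact hL0 a 6 ha1 han (by omega) (by omega) (by omega) (by omega)
  have hψ36 : ∀ a, 1 ≤ a → a ≤ n →
      ∀ v ∈ Submodule.span ℂ {v : g | ∃ s, 3 ≤ s ∧ s ≤ 6 ∧ v = e s},
      ψ (e a) v = 0 := by
    intro a ha1 han
    refine span_zero' (fun v => ψ (e a) v) (fun u v => map_add _ _ _)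
      (fun c u => map_smul _ _ _) ?_
    rintro v ⟨s, h3, h6, rfl⟩
    exact hzero a s ha1 (by omega) han (by omega) (by omega)
  refine tri_aux' hspan _ ?_ ?_ ?_ ?_ ?_ ?_ ?_
  · intro x x' y z
    simp only [add_lie, lie_add, map_add, LinearMap.add_apply]
    abel
  · intro c x y z
    simp only [smul_lie, lie_smul, map_smul, LinearMap.smul_apply, smul_add]
  · intro x y y' z
    simp only [add_lie, lie_add, map_add, LinearMap.add_apply]
    abel
  · intro c x y z
    simp only [smul_lie, lie_smul, map_smul, LinearMap.smul_apply, smul_add]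
  · intro x y z z'
    simp only [add_lie, lie_add, map_add, LinearMap.add_apply]
    abel
  · intro c x y z
    simp only [smul_lie, lie_smul, map_smul, LinearMap.smul_apply, smul_add]
  · rintro x hx y hy z hz
    obtain ⟨ia, rfl⟩ := hx
    obtain ⟨ib, rfl⟩ := hy
    obtain ⟨ic, rfl⟩ := hz
    have h1 := ia.isLt
    have h2 := ib.isLt
    have h3 := ic.isLt
    simp only []
    rw [hlie6 (ia.1 + 1) (by omega) (by omega) _ (hΨspan (ib.1 + 1) (ic.1 + 1) (by omega) (by omega) (by omega) (by omega)),
        hlie6 (ic.1 + 1) (by omega) (by omega) _ (hΨspan (ia.1 + 1) (ib.1 + 1) (by omega) (by omega) (by omega) (by omega)),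
        hlie6 (ib.1 + 1) (by omega) (by omega) _ (hΨspan (ic.1 + 1) (ia.1 + 1) (by omega) (by omega) (by omega) (by omega)),
        hψ36 (ia.1 + 1) (by omega) (by omega) _ (Lspan (ib.1 + 1) (ic.1 + 1) (by omega) (by omega) (by omega) (by omega)),
        hψ36 (ic.1 + 1) (by omega) (by omega) _ (Lspan (ia.1 + 1) (ib.1 + 1) (by omega) (by omega) (by omega) (by omega)),
        hψ36 (ib.1 + 1) (by omega) (by omega) _ (Lspan (ic.1 + 1) (ia.1 + 1) (by omega) (by omega) (by omega) (by omega))]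
    simp

private lemma partB (n : ℕ) (hn : 7 ≤ n) (g : Type*) [LieRing g] [LieAlgebra ℂ g]
    (e : ℕ → g)
    (hspan : Submodule.span ℂ (Set.range (fun i : Fin n => e (i.1 + 1))) = ⊤)
    (hbr : ∀ j, 2 ≤ j → j ≤ 5 → ⁅e 1, e j⁆ = e (j + 1))
    (hbr0 : ∀ i j, 1 ≤ i → i < j → j ≤ n → ¬(i = 1 ∧ 2 ≤ j ∧ j ≤ 5) → ⁅e i, e j⁆ = 0) :
    (∀ i j, 1 ≤ i → i ≤ n - 6 → j = 2 ∨ j = 3 ∨ j = 4 → ∀ ψ : g →ₗ[ℂ] g →ₗ[ℂ] g,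
      (∀ x : g, ψ x x = 0) →
      (∀ l, 2 ≤ l → l ≤ 6 - j → ψ (e (6 + i)) (e l) = e (l + j)) →
      (∀ a b, 1 ≤ a → 1 ≤ b → a ≤ n → b ≤ n →
        ¬((a = 6 + i ∧ 2 ≤ b ∧ b ≤ 6 - j) ∨ (b = 6 + i ∧ 2 ≤ a ∧ a ≤ 6 - j)) →
        ψ (e a) (e b) = 0) →
      ∀ x y z : g,
        ⁅x, ψ y z⁆ + ⁅z, ψ x y⁆ + ⁅y, ψ z x⁆ +
          ψ x ⁅y, z⁆ + ψ z ⁅x, y⁆ + ψ y ⁅z, x⁆ = 0) := by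
  have hsk : ∀ u v : g, ⁅u, v⁆ = -⁅v, u⁆ := fun u v => (lie_skew u v).symm
  have hL0 : ∀ a b, 1 ≤ a → a ≤ n → 1 ≤ b → b ≤ n → ¬(a = 1 ∧ 2 ≤ b ∧ b ≤ 5) →
      ¬(b = 1 ∧ 2 ≤ a ∧ a ≤ 5) → ⁅e a, e b⁆ = 0 := by
    intro a b ha1 han hb1 hbn hab hba
    rcases lt_trichotomy a b with h | h | h
    · exact hbr0 a b ha1 h hbn hab
    · rw [h]; exact lie_self _
    · rw [hsk (e a) (e b), hbr0 b a hb1 h han hba, neg_zero]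
  have Lspan : ∀ b c, 1 ≤ b → b ≤ n → 1 ≤ c → c ≤ n →
      ⁅e b, e c⁆ ∈ Submodule.span ℂ {v : g | ∃ s, 3 ≤ s ∧ s ≤ 6 ∧ v = e s} := by
    intro b c hb1 hbn hc1 hcn
    by_cases h1 : b = 1 ∧ 2 ≤ c ∧ c ≤ 5
    · obtain ⟨rfl, hc2, hc5⟩ := h1
      rw [hbr c hc2 hc5]
      exact Submodule.subset_span ⟨c + 1, by omega, by omega, rfl⟩
    · by_cases h2 : c = 1 ∧ 2 ≤ b ∧ b ≤ 5
      · obtain ⟨rfl, hb2, hb5⟩ := h2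
        rw [hsk (e b) (e 1), hbr b hb2 hb5]
        exact Submodule.neg_mem _ (Submodule.subset_span ⟨b + 1, by omega, by omega, rfl⟩)
      · rw [hL0 b c hb1 hbn hc1 hcn h1 h2]; exact Submodule.zero_mem _
  intro i j hi hin hj ψ halt hval hzero
  have hj2 : 2 ≤ j ∧ j ≤ 4 := by rcases hj with rfl | rfl | rfl <;> omega
  have hIn : 6 + i ≤ n := by omega
  have hanti : ∀ u v, ψ u v = -ψ v u := by
    intro u v
    have h := halt (u + v)
    simp only [map_add, LinearMap.add_apply, halt, zero_add, add_zero] at h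
    have h2 : ψ u v + ψ v u = 0 := by rw [← h]; abel
    exact eq_neg_of_add_eq_zero_left h2
  have hEswap : ∀ x y z : g,
      ⁅y, ψ x z⁆ + ⁅z, ψ y x⁆ + ⁅x, ψ z y⁆ + ψ y ⁅x, z⁆ + ψ z ⁅y, x⁆ + ψ x ⁅z, y⁆ =
      -(⁅x, ψ y z⁆ + ⁅z, ψ x y⁆ + ⁅y, ψ z x⁆ + ψ x ⁅y, z⁆ + ψ z ⁅x, y⁆ + ψ y ⁅z, x⁆) := by
    intro x y z
    rw [hanti x z, hanti y x, hanti z y, hsk x z, hsk y x, hsk z y]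
    simp only [lie_neg, map_neg]
    abel
  -- ψ of span{e s | 3 ≤ s ≤ 6} vanishes when first index ≠ 6+i
  have hψ0 : ∀ u, u ≠ 6 + i → 1 ≤ u → u ≤ n →
      ∀ v ∈ Submodule.span ℂ {v : g | ∃ s, 3 ≤ s ∧ s ≤ 6 ∧ v = e s},
      ψ (e u) v = 0 := by
    intro u hu hu1 hun
    refine span_zero' (fun v => ψ (e u) v) (fun u v => map_add _ _ _)
      (fun c u => map_smul _ _ _) ?_
    rintro v ⟨s, h3, h6, rfl⟩
    exact hzero u s hu1 (by omega) hun (by omega) (by omega)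
  have hΨspanb : ∀ b c, 1 ≤ b → b ≤ n → 1 ≤ c → c ≤ n →
      ψ (e b) (e c) ∈ Submodule.span ℂ {v : g | ∃ s, 4 ≤ s ∧ s ≤ 6 ∧ v = e s} := by
    intro b c hb1 hbn hc1 hcn
    by_cases h1 : b = 6 + i ∧ 2 ≤ c ∧ c ≤ 6 - j
    · obtain ⟨rfl, hc2, hc6⟩ := h1
      rw [hval c hc2 hc6]
      exact Submodule.subset_span ⟨c + j, by omega, by omega, rfl⟩
    · by_cases h2 : c = 6 + i ∧ 2 ≤ b ∧ b ≤ 6 - j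
      · obtain ⟨rfl, hb2, hb6⟩ := h2
        rw [hanti, hval b hb2 hb6]
        exact Submodule.neg_mem _ (Submodule.subset_span ⟨b + j, by omega, by omega, rfl⟩)
      · rw [hzero b c hb1 hc1 hbn hcn (by tauto)]; exact Submodule.zero_mem _
  have hlie0' : ∀ u, u ≠ 1 → 1 ≤ u → u ≤ n →
      ∀ v ∈ Submodule.span ℂ {v : g | ∃ s, 4 ≤ s ∧ s ≤ 6 ∧ v = e s},
      ⁅e u, v⁆ = 0 := by
    intro u hu hu1 hun
    refine span_zero' (fun v => ⁅e u, v⁆) (fun u v => lie_add _ _ _)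
      (fun c u => lie_smul _ _ _) ?_
    rintro v ⟨s, h4, h6, rfl⟩
    exact hL0 u s hu1 hun (by omega) (by omega) (by omega) (by omega)
  -- canonical case
  have canonical : ∀ d, 1 ≤ d → d ≤ n →
      ⁅e 1, ψ (e (6 + i)) (e d)⁆ + ⁅e d, ψ (e 1) (e (6 + i))⁆ +
        ⁅e (6 + i), ψ (e d) (e 1)⁆ + ψ (e 1) ⁅e (6 + i), e d⁆ +
        ψ (e d) ⁅e 1, e (6 + i)⁆ + ψ (e (6 + i)) ⁅e d, e 1⁆ = 0 := by
    intro d hd1 hdn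
    have hT2 : ψ (e 1) (e (6 + i)) = 0 :=
      hzero 1 (6 + i) (by omega) (by omega) (by omega) hIn (by omega)
    have hT3 : ψ (e d) (e 1) = 0 :=
      hzero d 1 hd1 (by omega) hdn (by omega) (by omega)
    have hT5 : ⁅e 1, e (6 + i)⁆ = 0 :=
      hbr0 1 (6 + i) (by omega) (by omega) hIn (by omega)
    have hT4 : ⁅e (6 + i), e d⁆ = 0 := by
      rcases lt_trichotomy (6 + i) d with h | h | h
      · exact hbr0 _ _ (by omega) h hdn (by omega)
      · rw [h]; exact lie_self _
      · rw [hsk (e (6 + i)) (e d), hbr0 d (6 + i) (by omega) h hIn (by omega), neg_zero]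
    rw [hT2, hT3, hT4, hT5]
    simp only [lie_zero, map_zero, add_zero, zero_add]
    by_cases hc1 : 2 ≤ d ∧ d ≤ 5 - j
    · rw [hval d (by omega) (by omega), hsk (e d) (e 1), hbr d (by omega) (by omega),
          map_neg, hval (d + 1) (by omega) (by omega), hbr (d + j) (by omega) (by omega),
          show d + 1 + j = d + j + 1 from by omega]
      abel
    · by_cases hc2 : d = 6 - j
      · have hv1 : ψ (e (6 + i)) (e d) = e (d + j) := hval d (by omega) (by omega)
        have h6 : d + j = 6 := by omega
        have hb6 : ⁅e 1, e 6⁆ = 0 := hbr0 1 6 (by omega) (by omega) (by omega) (by omega)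
        have hT6 : ψ (e (6 + i)) ⁅e d, e 1⁆ = 0 := by
          rw [hsk (e d) (e 1), hbr d (by omega) (by omega), map_neg,
            hzero (6 + i) (d + 1) (by omega) (by omega) hIn (by omega) (by omega), neg_zero]
        rw [hv1, h6, hb6, hT6, add_zero]
      · have hψd : ψ (e (6 + i)) (e d) = 0 :=
          hzero (6 + i) d (by omega) hd1 hIn hdn (by omega)
        have hT6 : ψ (e (6 + i)) ⁅e d, e 1⁆ = 0 := by
          by_cases hd5 : 2 ≤ d ∧ d ≤ 5
          · rw [hsk (e d) (e 1), hbr d hd5.1 hd5.2, map_neg,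
              hzero (6 + i) (d + 1) (by omega) (by omega) hIn (by omega) (by omega), neg_zero]
          · rcases eq_or_lt_of_le hd1 with h | h
            · rw [← h]; simp
            · rw [hsk (e d) (e 1), hbr0 1 d (by omega) (by omega) hdn (by omega), neg_zero,
                map_zero]
        rw [hψd, hT6, lie_zero, add_zero]
  -- main
  refine tri_aux' hspan _ ?_ ?_ ?_ ?_ ?_ ?_ ?_
  · intro x x' y z
    simp only [add_lie, lie_add, map_add, LinearMap.add_apply]
    abel
  · intro c x y z
    simp only [smul_lie, lie_smul, map_smul, LinearMap.smul_apply, smul_add]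
  · intro x y y' z
    simp only [add_lie, lie_add, map_add, LinearMap.add_apply]
    abel
  · intro c x y z
    simp only [smul_lie, lie_smul, map_smul, LinearMap.smul_apply, smul_add]
  · intro x y z z'
    simp only [add_lie, lie_add, map_add, LinearMap.add_apply]
    abel
  · intro c x y z
    simp only [smul_lie, lie_smul, map_smul, LinearMap.smul_apply, smul_add]
  · rintro x hx y hy z hz
    obtain ⟨ia, rfl⟩ := hx
    obtain ⟨ib, rfl⟩ := hy
    obtain ⟨ic, rfl⟩ := hz
    have hia := ia.isLt
    have hib := ib.isLt
    have hic := ic.isLt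
    simp only []
    have key : ∀ a b c, 1 ≤ a → a ≤ n → 1 ≤ b → b ≤ n → 1 ≤ c → c ≤ n →
        ⁅e a, ψ (e b) (e c)⁆ + ⁅e c, ψ (e a) (e b)⁆ + ⁅e b, ψ (e c) (e a)⁆ +
          ψ (e a) ⁅e b, e c⁆ + ψ (e c) ⁅e a, e b⁆ + ψ (e b) ⁅e c, e a⁆ = 0 := by
      intro a b c ha1 han hb1 hbn hc1 hcn
      by_cases hI : a = 6 + i ∨ b = 6 + i ∨ c = 6 + i
      · by_cases h1 : a = 1 ∨ b = 1 ∨ c = 1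
        · rcases h1 with rfl | rfl | rfl
          · rcases hI with hI | hI | hI
            · omega
            · subst hI
              exact canonical c hc1 hcn
            · subst hI
              rw [hEswap (e b) (e 1) (e (6 + i)), neg_eq_zero]
              have h := canonical b hb1 hbn
              abel_nf at h ⊢
              exact h
          · rcases hI with hI | hI | hI
            · subst hI
              rw [hEswap (e 1) (e (6 + i)) (e c), neg_eq_zero]
              exact canonical c hc1 hcn
            · omega
            · subst hI
              have h := canonical a ha1 han
              abel_nf at h ⊢
              exact h
          · rcases hI with hI | hI | hI
            · subst hI
              have h := canonical b hb1 hbn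
              abel_nf at h ⊢
              exact h
            · subst hI
              rw [hEswap (e (6 + i)) (e a) (e 1), neg_eq_zero]
              have h := canonical a ha1 han
              abel_nf at h ⊢
              exact h
            · omega
        · -- contains 6+i but no 1
          have r1 : ⁅e b, e c⁆ = 0 := hL0 b c hb1 hbn hc1 hcn (by omega) (by omega)
          have r2 : ⁅e a, e b⁆ = 0 := hL0 a b ha1 han hb1 hbn (by omega) (by omega)
          have r3 : ⁅e c, e a⁆ = 0 := hL0 c a hc1 hcn ha1 han (by omega) (by omega)
          have s1 : ⁅e a, ψ (e b) (e c)⁆ = 0 :=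
            hlie0' a (by omega) ha1 han _ (hΨspanb b c hb1 hbn hc1 hcn)
          have s2 : ⁅e c, ψ (e a) (e b)⁆ = 0 :=
            hlie0' c (by omega) hc1 hcn _ (hΨspanb a b ha1 han hb1 hbn)
          have s3 : ⁅e b, ψ (e c) (e a)⁆ = 0 :=
            hlie0' b (by omega) hb1 hbn _ (hΨspanb c a hc1 hcn ha1 han)
          rw [r1, r2, r3, s1, s2, s3]
          simp
      · -- no 6+i
        have q1 : ψ (e a) ⁅e b, e c⁆ = 0 :=
          hψ0 a (by omega) ha1 han _ (Lspan b c hb1 hbn hc1 hcn)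
        have q2 : ψ (e c) ⁅e a, e b⁆ = 0 :=
          hψ0 c (by omega) hc1 hcn _ (Lspan a b ha1 han hb1 hbn)
        have q3 : ψ (e b) ⁅e c, e a⁆ = 0 :=
          hψ0 b (by omega) hb1 hbn _ (Lspan c a hc1 hcn ha1 han)
        have p1 : ψ (e b) (e c) = 0 := hzero b c hb1 hc1 hbn hcn (by omega)
        have p2 : ψ (e a) (e b) = 0 := hzero a b ha1 hb1 han hbn (by omega)
        have p3 : ψ (e c) (e a) = 0 := hzero c a hc1 ha1 hcn han (by omega)
        rw [p1, p2, p3, q1, q2, q3]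
        simp
    exact key _ _ _ (by omega) (by omega) (by omega) (by omega) (by omega) (by omega)

private lemma partC (n : ℕ) (hn : 7 ≤ n) (g : Type*) [LieRing g] [LieAlgebra ℂ g]
    (e : ℕ → g)
    (hspan : Submodule.span ℂ (Set.range (fun i : Fin n => e (i.1 + 1))) = ⊤)
    (hbr : ∀ j, 2 ≤ j → j ≤ 5 → ⁅e 1, e j⁆ = e (j + 1))
    (hbr0 : ∀ i j, 1 ≤ i → i < j → j ≤ n → ¬(i = 1 ∧ 2 ≤ j ∧ j ≤ 5) → ⁅e i, e j⁆ = 0) :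
    (∀ m, 5 ≤ m → n = 2 * m → ∀ χ : g →ₗ[ℂ] g →ₗ[ℂ] g,
      (∀ x : g, χ x x = 0) →
      χ (e 5) (e 2) = e 7 →
      χ (e 3) (e 4) = e 7 →
      χ (e 3) (e 2) = e 8 →
      χ (e 8) (e 2) = e 5 →
      χ (e 8) (e 3) = e 6 →
      (∀ t, 2 ≤ t → t ≤ m - 3 → χ (e (2 * t + 5)) (e (2 * t + 6)) = e 6) →
      (∀ a b, 1 ≤ a → 1 ≤ b → a ≤ n → b ≤ n →
        ¬((a = 5 ∧ b = 2) ∨ (a = 2 ∧ b = 5) ∨ (a = 3 ∧ b = 4) ∨ (a = 4 ∧ b = 3) ∨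
          (a = 3 ∧ b = 2) ∨ (a = 2 ∧ b = 3) ∨ (a = 8 ∧ b = 2) ∨ (a = 2 ∧ b = 8) ∨
          (a = 8 ∧ b = 3) ∨ (a = 3 ∧ b = 8) ∨
          (∃ t, 2 ≤ t ∧ t ≤ m - 3 ∧
            ((a = 2 * t + 5 ∧ b = 2 * t + 6) ∨ (a = 2 * t + 6 ∧ b = 2 * t + 5)))) →
        χ (e a) (e b) = 0) →
      ∀ x y z : g,
        (⁅x, ⁅y, z⁆ + χ y z⁆ + χ x (⁅y, z⁆ + χ y z)) +
        (⁅z, ⁅x, y⁆ + χ x y⁆ + χ z (⁅x, y⁆ + χ x y)) +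
        (⁅y, ⁅z, x⁆ + χ z x⁆ + χ y (⁅z, x⁆ + χ z x)) = 0) := by
  have hsk : ∀ u v : g, ⁅u, v⁆ = -⁅v, u⁆ := fun u v => (lie_skew u v).symm
  have hL0 : ∀ a b, 1 ≤ a → a ≤ n → 1 ≤ b → b ≤ n → ¬(a = 1 ∧ 2 ≤ b ∧ b ≤ 5) →
      ¬(b = 1 ∧ 2 ≤ a ∧ a ≤ 5) → ⁅e a, e b⁆ = 0 := by
    intro a b ha1 han hb1 hbn hab hba
    rcases lt_trichotomy a b with h | h | h
    · exact hbr0 a b ha1 h hbn hab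
    · rw [h]; exact lie_self _
    · rw [hsk (e a) (e b), hbr0 b a hb1 h han hba, neg_zero]
  have Lspan : ∀ b c, 1 ≤ b → b ≤ n → 1 ≤ c → c ≤ n →
      ⁅e b, e c⁆ ∈ Submodule.span ℂ {v : g | ∃ s, 3 ≤ s ∧ s ≤ 6 ∧ v = e s} := by
    intro b c hb1 hbn hc1 hcn
    by_cases h1 : b = 1 ∧ 2 ≤ c ∧ c ≤ 5
    · obtain ⟨rfl, hc2, hc5⟩ := h1
      rw [hbr c hc2 hc5]
      exact Submodule.subset_span ⟨c + 1, by omega, by omega, rfl⟩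
    · by_cases h2 : c = 1 ∧ 2 ≤ b ∧ b ≤ 5
      · obtain ⟨rfl, hb2, hb5⟩ := h2
        rw [hsk (e b) (e 1), hbr b hb2 hb5]
        exact Submodule.neg_mem _ (Submodule.subset_span ⟨b + 1, by omega, by omega, rfl⟩)
      · rw [hL0 b c hb1 hbn hc1 hcn h1 h2]; exact Submodule.zero_mem _
  intro m hm5 hnm χ halt h52 h34 h32 h82 h83 hfam hz
  have h10 : 10 ≤ n := by omega
  have hanti : ∀ u v, χ u v = -χ v u := by
    intro u v
    have h := halt (u + v)
    simp only [map_add, LinearMap.add_apply, halt, zero_add, add_zero] at h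
    have h2 : χ u v + χ v u = 0 := by rw [← h]; abel
    exact eq_neg_of_add_eq_zero_left h2
  -- membership lemmas
  have hCspan : ∀ b c, 1 ≤ b → b ≤ n → 1 ≤ c → c ≤ n →
      χ (e b) (e c) ∈ Submodule.span ℂ {v : g | ∃ s, 3 ≤ s ∧ s ≤ 8 ∧ v = e s} := by
    intro b c hb1 hbn hc1 hcn
    by_cases hD : ((b = 5 ∧ c = 2) ∨ (b = 2 ∧ c = 5) ∨ (b = 3 ∧ c = 4) ∨ (b = 4 ∧ c = 3) ∨
          (b = 3 ∧ c = 2) ∨ (b = 2 ∧ c = 3) ∨ (b = 8 ∧ c = 2) ∨ (b = 2 ∧ c = 8) ∨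
          (b = 8 ∧ c = 3) ∨ (b = 3 ∧ c = 8) ∨
          (∃ t, 2 ≤ t ∧ t ≤ m - 3 ∧
            ((b = 2 * t + 5 ∧ c = 2 * t + 6) ∨ (b = 2 * t + 6 ∧ c = 2 * t + 5))))
    · rcases hD with ⟨rfl,rfl⟩|⟨rfl,rfl⟩|⟨rfl,rfl⟩|⟨rfl,rfl⟩|⟨rfl,rfl⟩|⟨rfl,rfl⟩|⟨rfl,rfl⟩|
        ⟨rfl,rfl⟩|⟨rfl,rfl⟩|⟨rfl,rfl⟩|⟨t,ht2,ht3,⟨rfl,rfl⟩|⟨rfl,rfl⟩⟩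
      · rw [h52]; exact Submodule.subset_span ⟨7, by omega, by omega, rfl⟩
      · rw [hanti, h52]
        exact Submodule.neg_mem _ (Submodule.subset_span ⟨7, by omega, by omega, rfl⟩)
      · rw [h34]; exact Submodule.subset_span ⟨7, by omega, by omega, rfl⟩
      · rw [hanti, h34]
        exact Submodule.neg_mem _ (Submodule.subset_span ⟨7, by omega, by omega, rfl⟩)
      · rw [h32]; exact Submodule.subset_span ⟨8, by omega, by omega, rfl⟩
      · rw [hanti, h32]
        exact Submodule.neg_mem _ (Submodule.subset_span ⟨8, by omega, by omega, rfl⟩)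
      · rw [h82]; exact Submodule.subset_span ⟨5, by omega, by omega, rfl⟩
      · rw [hanti, h82]
        exact Submodule.neg_mem _ (Submodule.subset_span ⟨5, by omega, by omega, rfl⟩)
      · rw [h83]; exact Submodule.subset_span ⟨6, by omega, by omega, rfl⟩
      · rw [hanti, h83]
        exact Submodule.neg_mem _ (Submodule.subset_span ⟨6, by omega, by omega, rfl⟩)
      · rw [hfam t ht2 ht3]; exact Submodule.subset_span ⟨6, by omega, by omega, rfl⟩
      · rw [hanti, hfam t ht2 ht3]
        exact Submodule.neg_mem _ (Submodule.subset_span ⟨6, by omega, by omega, rfl⟩)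
    · rw [hz b c hb1 hc1 hbn hcn hD]; exact Submodule.zero_mem _
  have hVspan8 : ∀ b c, 1 ≤ b → b ≤ n → 1 ≤ c → c ≤ n →
      ⁅e b, e c⁆ + χ (e b) (e c) ∈
        Submodule.span ℂ {v : g | ∃ s, 3 ≤ s ∧ s ≤ 8 ∧ v = e s} := by
    intro b c hb1 hbn hc1 hcn
    refine Submodule.add_mem _ ?_ (hCspan b c hb1 hbn hc1 hcn)
    refine Submodule.span_mono ?_ (Lspan b c hb1 hbn hc1 hcn)
    rintro v ⟨s, h3, h6, rfl⟩
    exact ⟨s, h3, by omega, rfl⟩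
  have hVsmall : ∀ b c, 1 ≤ b → b ≤ n → 1 ≤ c → c ≤ n → (9 ≤ b ∨ 9 ≤ c) →
      ⁅e b, e c⁆ + χ (e b) (e c) ∈ Submodule.span ℂ ({e 6} : Set g) := by
    intro b c hb1 hbn hc1 hcn h9
    have hlam : ⁅e b, e c⁆ = 0 := hL0 b c hb1 hbn hc1 hcn (by omega) (by omega)
    rw [hlam, zero_add]
    by_cases hD : ((b = 5 ∧ c = 2) ∨ (b = 2 ∧ c = 5) ∨ (b = 3 ∧ c = 4) ∨ (b = 4 ∧ c = 3) ∨
          (b = 3 ∧ c = 2) ∨ (b = 2 ∧ c = 3) ∨ (b = 8 ∧ c = 2) ∨ (b = 2 ∧ c = 8) ∨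
          (b = 8 ∧ c = 3) ∨ (b = 3 ∧ c = 8) ∨
          (∃ t, 2 ≤ t ∧ t ≤ m - 3 ∧
            ((b = 2 * t + 5 ∧ c = 2 * t + 6) ∨ (b = 2 * t + 6 ∧ c = 2 * t + 5))))
    · rcases hD with ⟨h,h'⟩|⟨h,h'⟩|⟨h,h'⟩|⟨h,h'⟩|⟨h,h'⟩|⟨h,h'⟩|⟨h,h'⟩|⟨h,h'⟩|⟨h,h'⟩|⟨h,h'⟩|
        ⟨t,ht2,ht3,⟨rfl,rfl⟩|⟨rfl,rfl⟩⟩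
      · omega
      · omega
      · omega
      · omega
      · omega
      · omega
      · omega
      · omega
      · omega
      · omega
      · rw [hfam t ht2 ht3]; exact Submodule.subset_span rfl
      · rw [hanti, hfam t ht2 ht3]
        exact Submodule.neg_mem _ (Submodule.subset_span rfl)
    · rw [hz b c hb1 hc1 hbn hcn hD]; exact Submodule.zero_mem _
  have hOuterE6 : ∀ a, 1 ≤ a → a ≤ n → ∀ v ∈ Submodule.span ℂ ({e 6} : Set g),
      ⁅e a, v⁆ + χ (e a) v = 0 := by
    intro a ha1 han
    refine span_zero' (fun v => ⁅e a, v⁆ + χ (e a) v) ?_ ?_ ?_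
    · intro u v; simp only [lie_add, map_add]; abel
    · intro c u; simp only [lie_smul, map_smul, smul_add]
    · intro v hv
      rw [Set.mem_singleton_iff] at hv; subst hv
      have hb : ⁅e a, e 6⁆ = 0 := hL0 a 6 ha1 han (by omega) (by omega) (by omega) (by omega)
      have hc : χ (e a) (e 6) = 0 := hz a 6 ha1 (by omega) han (by omega)
        (by rintro (⟨h,h'⟩|⟨h,h'⟩|⟨h,h'⟩|⟨h,h'⟩|⟨h,h'⟩|⟨h,h'⟩|⟨h,h'⟩|⟨h,h'⟩|⟨h,h'⟩|⟨h,h'⟩|⟨t,ht2,ht3,(⟨h,h'⟩|⟨h,h'⟩)⟩) <;> omega)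
      simp [hb, hc]
  have hOuterBig : ∀ a, 9 ≤ a → a ≤ n →
      ∀ v ∈ Submodule.span ℂ {v : g | ∃ s, 3 ≤ s ∧ s ≤ 8 ∧ v = e s},
      ⁅e a, v⁆ + χ (e a) v = 0 := by
    intro a h9 han
    refine span_zero' (fun v => ⁅e a, v⁆ + χ (e a) v) ?_ ?_ ?_
    · intro u v; simp only [lie_add, map_add]; abel
    · intro c u; simp only [lie_smul, map_smul, smul_add]
    · rintro v ⟨s, h3, h8, rfl⟩
      have hb : ⁅e a, e s⁆ = 0 := hL0 a s (by omega) han (by omega) (by omega) (by omega) (by omega)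
      have hc : χ (e a) (e s) = 0 := hz a s (by omega) (by omega) han (by omega)
        (by rintro (⟨h,h'⟩|⟨h,h'⟩|⟨h,h'⟩|⟨h,h'⟩|⟨h,h'⟩|⟨h,h'⟩|⟨h,h'⟩|⟨h,h'⟩|⟨h,h'⟩|⟨h,h'⟩|⟨t,ht2,ht3,(⟨h,h'⟩|⟨h,h'⟩)⟩) <;> omega)
      simp [hb, hc]
  have key : ∀ a b c, 1 ≤ a → a ≤ n → 1 ≤ b → b ≤ n → 1 ≤ c → c ≤ n →
      (⁅e a, ⁅e b, e c⁆ + χ (e b) (e c)⁆ + χ (e a) (⁅e b, e c⁆ + χ (e b) (e c))) +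
      (⁅e c, ⁅e a, e b⁆ + χ (e a) (e b)⁆ + χ (e c) (⁅e a, e b⁆ + χ (e a) (e b))) +
      (⁅e b, ⁅e c, e a⁆ + χ (e c) (e a)⁆ + χ (e b) (⁅e c, e a⁆ + χ (e c) (e a))) = 0 := by
    intro a b c ha1 han hb1 hbn hc1 hcn
    by_cases hsmall : a ≤ 8 ∧ b ≤ 8 ∧ c ≤ 8
    case neg =>
      have t1 : ⁅e a, ⁅e b, e c⁆ + χ (e b) (e c)⁆ + χ (e a) (⁅e b, e c⁆ + χ (e b) (e c)) = 0 := by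
        by_cases h9 : 9 ≤ a
        · exact hOuterBig a h9 han _ (hVspan8 b c hb1 hbn hc1 hcn)
        · exact hOuterE6 a ha1 han _ (hVsmall b c hb1 hbn hc1 hcn (by omega))
      have t2 : ⁅e c, ⁅e a, e b⁆ + χ (e a) (e b)⁆ + χ (e c) (⁅e a, e b⁆ + χ (e a) (e b)) = 0 := by
        by_cases h9 : 9 ≤ c
        · exact hOuterBig c h9 hcn _ (hVspan8 a b ha1 han hb1 hbn)
        · exact hOuterE6 c hc1 hcn _ (hVsmall a b ha1 han hb1 hbn (by omega))
      have t3 : ⁅e b, ⁅e c, e a⁆ + χ (e c) (e a)⁆ + χ (e b) (⁅e c, e a⁆ + χ (e c) (e a)) = 0 := by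
        by_cases h9 : 9 ≤ b
        · exact hOuterBig b h9 hbn _ (hVspan8 c a hc1 hcn ha1 han)
        · exact hOuterE6 b hb1 hbn _ (hVsmall c a hc1 hcn ha1 han (by omega))
      rw [t1, t2, t3]
      simp
    case pos =>
    obtain ⟨ha8, hb8, hc8⟩ := hsmall
    have L11 : ⁅e 1, e 1⁆ = 0 := lie_self _
    have L12 : ⁅e 1, e 2⁆ = e 3 := by
      have h := hbr 2 (by norm_num) (by norm_num); norm_num at h; exact h
    have L13 : ⁅e 1, e 3⁆ = e 4 := by
      have h := hbr 3 (by norm_num) (by norm_num); norm_num at h; exact h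
    have L14 : ⁅e 1, e 4⁆ = e 5 := by
      have h := hbr 4 (by norm_num) (by norm_num); norm_num at h; exact h
    have L15 : ⁅e 1, e 5⁆ = e 6 := by
      have h := hbr 5 (by norm_num) (by norm_num); norm_num at h; exact h
    have L16 : ⁅e 1, e 6⁆ = 0 := hL0 1 6 (by norm_num) (by omega) (by norm_num) (by omega) (by omega) (by omega)
    have L17 : ⁅e 1, e 7⁆ = 0 := hL0 1 7 (by norm_num) (by omega) (by norm_num) (by omega) (by omega) (by omega)
    have L18 : ⁅e 1, e 8⁆ = 0 := hL0 1 8 (by norm_num) (by omega) (by norm_num) (by omega) (by omega) (by omega)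
    have L21 : ⁅e 2, e 1⁆ = -e 3 := by
      rw [hsk (e 2) (e 1)]
      have h := hbr 2 (by norm_num) (by norm_num); norm_num at h; rw [h]
    have L22 : ⁅e 2, e 2⁆ = 0 := lie_self _
    have L23 : ⁅e 2, e 3⁆ = 0 := hL0 2 3 (by norm_num) (by omega) (by norm_num) (by omega) (by omega) (by omega)
    have L24 : ⁅e 2, e 4⁆ = 0 := hL0 2 4 (by norm_num) (by omega) (by norm_num) (by omega) (by omega) (by omega)
    have L25 : ⁅e 2, e 5⁆ = 0 := hL0 2 5 (by norm_num) (by omega) (by norm_num) (by omega) (by omega) (by omega)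
    have L26 : ⁅e 2, e 6⁆ = 0 := hL0 2 6 (by norm_num) (by omega) (by norm_num) (by omega) (by omega) (by omega)
    have L27 : ⁅e 2, e 7⁆ = 0 := hL0 2 7 (by norm_num) (by omega) (by norm_num) (by omega) (by omega) (by omega)
    have L28 : ⁅e 2, e 8⁆ = 0 := hL0 2 8 (by norm_num) (by omega) (by norm_num) (by omega) (by omega) (by omega)
    have L31 : ⁅e 3, e 1⁆ = -e 4 := by
      rw [hsk (e 3) (e 1)]
      have h := hbr 3 (by norm_num) (by norm_num); norm_num at h; rw [h]
    have L32 : ⁅e 3, e 2⁆ = 0 := hL0 3 2 (by norm_num) (by omega) (by norm_num) (by omega) (by omega) (by omega)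
    have L33 : ⁅e 3, e 3⁆ = 0 := lie_self _
    have L34 : ⁅e 3, e 4⁆ = 0 := hL0 3 4 (by norm_num) (by omega) (by norm_num) (by omega) (by omega) (by omega)
    have L35 : ⁅e 3, e 5⁆ = 0 := hL0 3 5 (by norm_num) (by omega) (by norm_num) (by omega) (by omega) (by omega)
    have L36 : ⁅e 3, e 6⁆ = 0 := hL0 3 6 (by norm_num) (by omega) (by norm_num) (by omega) (by omega) (by omega)
    have L37 : ⁅e 3, e 7⁆ = 0 := hL0 3 7 (by norm_num) (by omega) (by norm_num) (by omega) (by omega) (by omega)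
    have L38 : ⁅e 3, e 8⁆ = 0 := hL0 3 8 (by norm_num) (by omega) (by norm_num) (by omega) (by omega) (by omega)
    have L41 : ⁅e 4, e 1⁆ = -e 5 := by
      rw [hsk (e 4) (e 1)]
      have h := hbr 4 (by norm_num) (by norm_num); norm_num at h; rw [h]
    have L42 : ⁅e 4, e 2⁆ = 0 := hL0 4 2 (by norm_num) (by omega) (by norm_num) (by omega) (by omega) (by omega)
    have L43 : ⁅e 4, e 3⁆ = 0 := hL0 4 3 (by norm_num) (by omega) (by norm_num) (by omega) (by omega) (by omega)
    have L44 : ⁅e 4, e 4⁆ = 0 := lie_self _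
    have L45 : ⁅e 4, e 5⁆ = 0 := hL0 4 5 (by norm_num) (by omega) (by norm_num) (by omega) (by omega) (by omega)
    have L46 : ⁅e 4, e 6⁆ = 0 := hL0 4 6 (by norm_num) (by omega) (by norm_num) (by omega) (by omega) (by omega)
    have L47 : ⁅e 4, e 7⁆ = 0 := hL0 4 7 (by norm_num) (by omega) (by norm_num) (by omega) (by omega) (by omega)
    have L48 : ⁅e 4, e 8⁆ = 0 := hL0 4 8 (by norm_num) (by omega) (by norm_num) (by omega) (by omega) (by omega)
    have L51 : ⁅e 5, e 1⁆ = -e 6 := by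
      rw [hsk (e 5) (e 1)]
      have h := hbr 5 (by norm_num) (by norm_num); norm_num at h; rw [h]
    have L52 : ⁅e 5, e 2⁆ = 0 := hL0 5 2 (by norm_num) (by omega) (by norm_num) (by omega) (by omega) (by omega)
    have L53 : ⁅e 5, e 3⁆ = 0 := hL0 5 3 (by norm_num) (by omega) (by norm_num) (by omega) (by omega) (by omega)
    have L54 : ⁅e 5, e 4⁆ = 0 := hL0 5 4 (by norm_num) (by omega) (by norm_num) (by omega) (by omega) (by omega)
    have L55 : ⁅e 5, e 5⁆ = 0 := lie_self _
    have L56 : ⁅e 5, e 6⁆ = 0 := hL0 5 6 (by norm_num) (by omega) (by norm_num) (by omega) (by omega) (by omega)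
    have L57 : ⁅e 5, e 7⁆ = 0 := hL0 5 7 (by norm_num) (by omega) (by norm_num) (by omega) (by omega) (by omega)
    have L58 : ⁅e 5, e 8⁆ = 0 := hL0 5 8 (by norm_num) (by omega) (by norm_num) (by omega) (by omega) (by omega)
    have L61 : ⁅e 6, e 1⁆ = 0 := hL0 6 1 (by norm_num) (by omega) (by norm_num) (by omega) (by omega) (by omega)
    have L62 : ⁅e 6, e 2⁆ = 0 := hL0 6 2 (by norm_num) (by omega) (by norm_num) (by omega) (by omega) (by omega)
    have L63 : ⁅e 6, e 3⁆ = 0 := hL0 6 3 (by norm_num) (by omega) (by norm_num) (by omega) (by omega) (by omega)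
    have L64 : ⁅e 6, e 4⁆ = 0 := hL0 6 4 (by norm_num) (by omega) (by norm_num) (by omega) (by omega) (by omega)
    have L65 : ⁅e 6, e 5⁆ = 0 := hL0 6 5 (by norm_num) (by omega) (by norm_num) (by omega) (by omega) (by omega)
    have L66 : ⁅e 6, e 6⁆ = 0 := lie_self _
    have L67 : ⁅e 6, e 7⁆ = 0 := hL0 6 7 (by norm_num) (by omega) (by norm_num) (by omega) (by omega) (by omega)
    have L68 : ⁅e 6, e 8⁆ = 0 := hL0 6 8 (by norm_num) (by omega) (by norm_num) (by omega) (by omega) (by omega)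
    have L71 : ⁅e 7, e 1⁆ = 0 := hL0 7 1 (by norm_num) (by omega) (by norm_num) (by omega) (by omega) (by omega)
    have L72 : ⁅e 7, e 2⁆ = 0 := hL0 7 2 (by norm_num) (by omega) (by norm_num) (by omega) (by omega) (by omega)
    have L73 : ⁅e 7, e 3⁆ = 0 := hL0 7 3 (by norm_num) (by omega) (by norm_num) (by omega) (by omega) (by omega)
    have L74 : ⁅e 7, e 4⁆ = 0 := hL0 7 4 (by norm_num) (by omega) (by norm_num) (by omega) (by omega) (by omega)
    have L75 : ⁅e 7, e 5⁆ = 0 := hL0 7 5 (by norm_num) (by omega) (by norm_num) (by omega) (by omega) (by omega)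
    have L76 : ⁅e 7, e 6⁆ = 0 := hL0 7 6 (by norm_num) (by omega) (by norm_num) (by omega) (by omega) (by omega)
    have L77 : ⁅e 7, e 7⁆ = 0 := lie_self _
    have L78 : ⁅e 7, e 8⁆ = 0 := hL0 7 8 (by norm_num) (by omega) (by norm_num) (by omega) (by omega) (by omega)
    have L81 : ⁅e 8, e 1⁆ = 0 := hL0 8 1 (by norm_num) (by omega) (by norm_num) (by omega) (by omega) (by omega)
    have L82 : ⁅e 8, e 2⁆ = 0 := hL0 8 2 (by norm_num) (by omega) (by norm_num) (by omega) (by omega) (by omega)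
    have L83 : ⁅e 8, e 3⁆ = 0 := hL0 8 3 (by norm_num) (by omega) (by norm_num) (by omega) (by omega) (by omega)
    have L84 : ⁅e 8, e 4⁆ = 0 := hL0 8 4 (by norm_num) (by omega) (by norm_num) (by omega) (by omega) (by omega)
    have L85 : ⁅e 8, e 5⁆ = 0 := hL0 8 5 (by norm_num) (by omega) (by norm_num) (by omega) (by omega) (by omega)
    have L86 : ⁅e 8, e 6⁆ = 0 := hL0 8 6 (by norm_num) (by omega) (by norm_num) (by omega) (by omega) (by omega)
    have L87 : ⁅e 8, e 7⁆ = 0 := hL0 8 7 (by norm_num) (by omega) (by norm_num) (by omega) (by omega) (by omega)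
    have L88 : ⁅e 8, e 8⁆ = 0 := lie_self _
    have C11 : χ (e 1) (e 1) = 0 := halt _
    have C12 : χ (e 1) (e 2) = 0 := hz 1 2 (by norm_num) (by norm_num) (by omega) (by omega)
      (by rintro (⟨h,h'⟩|⟨h,h'⟩|⟨h,h'⟩|⟨h,h'⟩|⟨h,h'⟩|⟨h,h'⟩|⟨h,h'⟩|⟨h,h'⟩|⟨h,h'⟩|⟨h,h'⟩|⟨t,ht2,ht3,(⟨h,h'⟩|⟨h,h'⟩)⟩) <;> omega)
    have C13 : χ (e 1) (e 3) = 0 := hz 1 3 (by norm_num) (by norm_num) (by omega) (by omega)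
      (by rintro (⟨h,h'⟩|⟨h,h'⟩|⟨h,h'⟩|⟨h,h'⟩|⟨h,h'⟩|⟨h,h'⟩|⟨h,h'⟩|⟨h,h'⟩|⟨h,h'⟩|⟨h,h'⟩|⟨t,ht2,ht3,(⟨h,h'⟩|⟨h,h'⟩)⟩) <;> omega)
    have C14 : χ (e 1) (e 4) = 0 := hz 1 4 (by norm_num) (by norm_num) (by omega) (by omega)
      (by rintro (⟨h,h'⟩|⟨h,h'⟩|⟨h,h'⟩|⟨h,h'⟩|⟨h,h'⟩|⟨h,h'⟩|⟨h,h'⟩|⟨h,h'⟩|⟨h,h'⟩|⟨h,h'⟩|⟨t,ht2,ht3,(⟨h,h'⟩|⟨h,h'⟩)⟩) <;> omega)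
    have C15 : χ (e 1) (e 5) = 0 := hz 1 5 (by norm_num) (by norm_num) (by omega) (by omega)
      (by rintro (⟨h,h'⟩|⟨h,h'⟩|⟨h,h'⟩|⟨h,h'⟩|⟨h,h'⟩|⟨h,h'⟩|⟨h,h'⟩|⟨h,h'⟩|⟨h,h'⟩|⟨h,h'⟩|⟨t,ht2,ht3,(⟨h,h'⟩|⟨h,h'⟩)⟩) <;> omega)
    have C16 : χ (e 1) (e 6) = 0 := hz 1 6 (by norm_num) (by norm_num) (by omega) (by omega)
      (by rintro (⟨h,h'⟩|⟨h,h'⟩|⟨h,h'⟩|⟨h,h'⟩|⟨h,h'⟩|⟨h,h'⟩|⟨h,h'⟩|⟨h,h'⟩|⟨h,h'⟩|⟨h,h'⟩|⟨t,ht2,ht3,(⟨h,h'⟩|⟨h,h'⟩)⟩) <;> omega)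
    have C17 : χ (e 1) (e 7) = 0 := hz 1 7 (by norm_num) (by norm_num) (by omega) (by omega)
      (by rintro (⟨h,h'⟩|⟨h,h'⟩|⟨h,h'⟩|⟨h,h'⟩|⟨h,h'⟩|⟨h,h'⟩|⟨h,h'⟩|⟨h,h'⟩|⟨h,h'⟩|⟨h,h'⟩|⟨t,ht2,ht3,(⟨h,h'⟩|⟨h,h'⟩)⟩) <;> omega)
    have C18 : χ (e 1) (e 8) = 0 := hz 1 8 (by norm_num) (by norm_num) (by omega) (by omega)
      (by rintro (⟨h,h'⟩|⟨h,h'⟩|⟨h,h'⟩|⟨h,h'⟩|⟨h,h'⟩|⟨h,h'⟩|⟨h,h'⟩|⟨h,h'⟩|⟨h,h'⟩|⟨h,h'⟩|⟨t,ht2,ht3,(⟨h,h'⟩|⟨h,h'⟩)⟩) <;> omega)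
    have C21 : χ (e 2) (e 1) = 0 := hz 2 1 (by norm_num) (by norm_num) (by omega) (by omega)
      (by rintro (⟨h,h'⟩|⟨h,h'⟩|⟨h,h'⟩|⟨h,h'⟩|⟨h,h'⟩|⟨h,h'⟩|⟨h,h'⟩|⟨h,h'⟩|⟨h,h'⟩|⟨h,h'⟩|⟨t,ht2,ht3,(⟨h,h'⟩|⟨h,h'⟩)⟩) <;> omega)
    have C22 : χ (e 2) (e 2) = 0 := halt _
    have C23 : χ (e 2) (e 3) = -e 8 := by
      rw [hanti (e 2) (e 3), h32]
    have C24 : χ (e 2) (e 4) = 0 := hz 2 4 (by norm_num) (by norm_num) (by omega) (by omega)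
      (by rintro (⟨h,h'⟩|⟨h,h'⟩|⟨h,h'⟩|⟨h,h'⟩|⟨h,h'⟩|⟨h,h'⟩|⟨h,h'⟩|⟨h,h'⟩|⟨h,h'⟩|⟨h,h'⟩|⟨t,ht2,ht3,(⟨h,h'⟩|⟨h,h'⟩)⟩) <;> omega)
    have C25 : χ (e 2) (e 5) = -e 7 := by
      rw [hanti (e 2) (e 5), h52]
    have C26 : χ (e 2) (e 6) = 0 := hz 2 6 (by norm_num) (by norm_num) (by omega) (by omega)
      (by rintro (⟨h,h'⟩|⟨h,h'⟩|⟨h,h'⟩|⟨h,h'⟩|⟨h,h'⟩|⟨h,h'⟩|⟨h,h'⟩|⟨h,h'⟩|⟨h,h'⟩|⟨h,h'⟩|⟨t,ht2,ht3,(⟨h,h'⟩|⟨h,h'⟩)⟩) <;> omega)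
    have C27 : χ (e 2) (e 7) = 0 := hz 2 7 (by norm_num) (by norm_num) (by omega) (by omega)
      (by rintro (⟨h,h'⟩|⟨h,h'⟩|⟨h,h'⟩|⟨h,h'⟩|⟨h,h'⟩|⟨h,h'⟩|⟨h,h'⟩|⟨h,h'⟩|⟨h,h'⟩|⟨h,h'⟩|⟨t,ht2,ht3,(⟨h,h'⟩|⟨h,h'⟩)⟩) <;> omega)
    have C28 : χ (e 2) (e 8) = -e 5 := by
      rw [hanti (e 2) (e 8), h82]
    have C31 : χ (e 3) (e 1) = 0 := hz 3 1 (by norm_num) (by norm_num) (by omega) (by omega)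
      (by rintro (⟨h,h'⟩|⟨h,h'⟩|⟨h,h'⟩|⟨h,h'⟩|⟨h,h'⟩|⟨h,h'⟩|⟨h,h'⟩|⟨h,h'⟩|⟨h,h'⟩|⟨h,h'⟩|⟨t,ht2,ht3,(⟨h,h'⟩|⟨h,h'⟩)⟩) <;> omega)
    have C32 : χ (e 3) (e 2) = e 8 := h32
    have C33 : χ (e 3) (e 3) = 0 := halt _
    have C34 : χ (e 3) (e 4) = e 7 := h34
    have C35 : χ (e 3) (e 5) = 0 := hz 3 5 (by norm_num) (by norm_num) (by omega) (by omega)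
      (by rintro (⟨h,h'⟩|⟨h,h'⟩|⟨h,h'⟩|⟨h,h'⟩|⟨h,h'⟩|⟨h,h'⟩|⟨h,h'⟩|⟨h,h'⟩|⟨h,h'⟩|⟨h,h'⟩|⟨t,ht2,ht3,(⟨h,h'⟩|⟨h,h'⟩)⟩) <;> omega)
    have C36 : χ (e 3) (e 6) = 0 := hz 3 6 (by norm_num) (by norm_num) (by omega) (by omega)
      (by rintro (⟨h,h'⟩|⟨h,h'⟩|⟨h,h'⟩|⟨h,h'⟩|⟨h,h'⟩|⟨h,h'⟩|⟨h,h'⟩|⟨h,h'⟩|⟨h,h'⟩|⟨h,h'⟩|⟨t,ht2,ht3,(⟨h,h'⟩|⟨h,h'⟩)⟩) <;> omega)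
    have C37 : χ (e 3) (e 7) = 0 := hz 3 7 (by norm_num) (by norm_num) (by omega) (by omega)
      (by rintro (⟨h,h'⟩|⟨h,h'⟩|⟨h,h'⟩|⟨h,h'⟩|⟨h,h'⟩|⟨h,h'⟩|⟨h,h'⟩|⟨h,h'⟩|⟨h,h'⟩|⟨h,h'⟩|⟨t,ht2,ht3,(⟨h,h'⟩|⟨h,h'⟩)⟩) <;> omega)
    have C38 : χ (e 3) (e 8) = -e 6 := by
      rw [hanti (e 3) (e 8), h83]
    have C41 : χ (e 4) (e 1) = 0 := hz 4 1 (by norm_num) (by norm_num) (by omega) (by omega)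
      (by rintro (⟨h,h'⟩|⟨h,h'⟩|⟨h,h'⟩|⟨h,h'⟩|⟨h,h'⟩|⟨h,h'⟩|⟨h,h'⟩|⟨h,h'⟩|⟨h,h'⟩|⟨h,h'⟩|⟨t,ht2,ht3,(⟨h,h'⟩|⟨h,h'⟩)⟩) <;> omega)
    have C42 : χ (e 4) (e 2) = 0 := hz 4 2 (by norm_num) (by norm_num) (by omega) (by omega)
      (by rintro (⟨h,h'⟩|⟨h,h'⟩|⟨h,h'⟩|⟨h,h'⟩|⟨h,h'⟩|⟨h,h'⟩|⟨h,h'⟩|⟨h,h'⟩|⟨h,h'⟩|⟨h,h'⟩|⟨t,ht2,ht3,(⟨h,h'⟩|⟨h,h'⟩)⟩) <;> omega)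
    have C43 : χ (e 4) (e 3) = -e 7 := by
      rw [hanti (e 4) (e 3), h34]
    have C44 : χ (e 4) (e 4) = 0 := halt _
    have C45 : χ (e 4) (e 5) = 0 := hz 4 5 (by norm_num) (by norm_num) (by omega) (by omega)
      (by rintro (⟨h,h'⟩|⟨h,h'⟩|⟨h,h'⟩|⟨h,h'⟩|⟨h,h'⟩|⟨h,h'⟩|⟨h,h'⟩|⟨h,h'⟩|⟨h,h'⟩|⟨h,h'⟩|⟨t,ht2,ht3,(⟨h,h'⟩|⟨h,h'⟩)⟩) <;> omega)
    have C46 : χ (e 4) (e 6) = 0 := hz 4 6 (by norm_num) (by norm_num) (by omega) (by omega)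
      (by rintro (⟨h,h'⟩|⟨h,h'⟩|⟨h,h'⟩|⟨h,h'⟩|⟨h,h'⟩|⟨h,h'⟩|⟨h,h'⟩|⟨h,h'⟩|⟨h,h'⟩|⟨h,h'⟩|⟨t,ht2,ht3,(⟨h,h'⟩|⟨h,h'⟩)⟩) <;> omega)
    have C47 : χ (e 4) (e 7) = 0 := hz 4 7 (by norm_num) (by norm_num) (by omega) (by omega)
      (by rintro (⟨h,h'⟩|⟨h,h'⟩|⟨h,h'⟩|⟨h,h'⟩|⟨h,h'⟩|⟨h,h'⟩|⟨h,h'⟩|⟨h,h'⟩|⟨h,h'⟩|⟨h,h'⟩|⟨t,ht2,ht3,(⟨h,h'⟩|⟨h,h'⟩)⟩) <;> omega)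
    have C48 : χ (e 4) (e 8) = 0 := hz 4 8 (by norm_num) (by norm_num) (by omega) (by omega)
      (by rintro (⟨h,h'⟩|⟨h,h'⟩|⟨h,h'⟩|⟨h,h'⟩|⟨h,h'⟩|⟨h,h'⟩|⟨h,h'⟩|⟨h,h'⟩|⟨h,h'⟩|⟨h,h'⟩|⟨t,ht2,ht3,(⟨h,h'⟩|⟨h,h'⟩)⟩) <;> omega)
    have C51 : χ (e 5) (e 1) = 0 := hz 5 1 (by norm_num) (by norm_num) (by omega) (by omega)
      (by rintro (⟨h,h'⟩|⟨h,h'⟩|⟨h,h'⟩|⟨h,h'⟩|⟨h,h'⟩|⟨h,h'⟩|⟨h,h'⟩|⟨h,h'⟩|⟨h,h'⟩|⟨h,h'⟩|⟨t,ht2,ht3,(⟨h,h'⟩|⟨h,h'⟩)⟩) <;> omega)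
    have C52 : χ (e 5) (e 2) = e 7 := h52
    have C53 : χ (e 5) (e 3) = 0 := hz 5 3 (by norm_num) (by norm_num) (by omega) (by omega)
      (by rintro (⟨h,h'⟩|⟨h,h'⟩|⟨h,h'⟩|⟨h,h'⟩|⟨h,h'⟩|⟨h,h'⟩|⟨h,h'⟩|⟨h,h'⟩|⟨h,h'⟩|⟨h,h'⟩|⟨t,ht2,ht3,(⟨h,h'⟩|⟨h,h'⟩)⟩) <;> omega)
    have C54 : χ (e 5) (e 4) = 0 := hz 5 4 (by norm_num) (by norm_num) (by omega) (by omega)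
      (by rintro (⟨h,h'⟩|⟨h,h'⟩|⟨h,h'⟩|⟨h,h'⟩|⟨h,h'⟩|⟨h,h'⟩|⟨h,h'⟩|⟨h,h'⟩|⟨h,h'⟩|⟨h,h'⟩|⟨t,ht2,ht3,(⟨h,h'⟩|⟨h,h'⟩)⟩) <;> omega)
    have C55 : χ (e 5) (e 5) = 0 := halt _
    have C56 : χ (e 5) (e 6) = 0 := hz 5 6 (by norm_num) (by norm_num) (by omega) (by omega)
      (by rintro (⟨h,h'⟩|⟨h,h'⟩|⟨h,h'⟩|⟨h,h'⟩|⟨h,h'⟩|⟨h,h'⟩|⟨h,h'⟩|⟨h,h'⟩|⟨h,h'⟩|⟨h,h'⟩|⟨t,ht2,ht3,(⟨h,h'⟩|⟨h,h'⟩)⟩) <;> omega)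
    have C57 : χ (e 5) (e 7) = 0 := hz 5 7 (by norm_num) (by norm_num) (by omega) (by omega)
      (by rintro (⟨h,h'⟩|⟨h,h'⟩|⟨h,h'⟩|⟨h,h'⟩|⟨h,h'⟩|⟨h,h'⟩|⟨h,h'⟩|⟨h,h'⟩|⟨h,h'⟩|⟨h,h'⟩|⟨t,ht2,ht3,(⟨h,h'⟩|⟨h,h'⟩)⟩) <;> omega)
    have C58 : χ (e 5) (e 8) = 0 := hz 5 8 (by norm_num) (by norm_num) (by omega) (by omega)
      (by rintro (⟨h,h'⟩|⟨h,h'⟩|⟨h,h'⟩|⟨h,h'⟩|⟨h,h'⟩|⟨h,h'⟩|⟨h,h'⟩|⟨h,h'⟩|⟨h,h'⟩|⟨h,h'⟩|⟨t,ht2,ht3,(⟨h,h'⟩|⟨h,h'⟩)⟩) <;> omega)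
    have C61 : χ (e 6) (e 1) = 0 := hz 6 1 (by norm_num) (by norm_num) (by omega) (by omega)
      (by rintro (⟨h,h'⟩|⟨h,h'⟩|⟨h,h'⟩|⟨h,h'⟩|⟨h,h'⟩|⟨h,h'⟩|⟨h,h'⟩|⟨h,h'⟩|⟨h,h'⟩|⟨h,h'⟩|⟨t,ht2,ht3,(⟨h,h'⟩|⟨h,h'⟩)⟩) <;> omega)
    have C62 : χ (e 6) (e 2) = 0 := hz 6 2 (by norm_num) (by norm_num) (by omega) (by omega)
      (by rintro (⟨h,h'⟩|⟨h,h'⟩|⟨h,h'⟩|⟨h,h'⟩|⟨h,h'⟩|⟨h,h'⟩|⟨h,h'⟩|⟨h,h'⟩|⟨h,h'⟩|⟨h,h'⟩|⟨t,ht2,ht3,(⟨h,h'⟩|⟨h,h'⟩)⟩) <;> omega)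
    have C63 : χ (e 6) (e 3) = 0 := hz 6 3 (by norm_num) (by norm_num) (by omega) (by omega)
      (by rintro (⟨h,h'⟩|⟨h,h'⟩|⟨h,h'⟩|⟨h,h'⟩|⟨h,h'⟩|⟨h,h'⟩|⟨h,h'⟩|⟨h,h'⟩|⟨h,h'⟩|⟨h,h'⟩|⟨t,ht2,ht3,(⟨h,h'⟩|⟨h,h'⟩)⟩) <;> omega)
    have C64 : χ (e 6) (e 4) = 0 := hz 6 4 (by norm_num) (by norm_num) (by omega) (by omega)
      (by rintro (⟨h,h'⟩|⟨h,h'⟩|⟨h,h'⟩|⟨h,h'⟩|⟨h,h'⟩|⟨h,h'⟩|⟨h,h'⟩|⟨h,h'⟩|⟨h,h'⟩|⟨h,h'⟩|⟨t,ht2,ht3,(⟨h,h'⟩|⟨h,h'⟩)⟩) <;> omega)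
    have C65 : χ (e 6) (e 5) = 0 := hz 6 5 (by norm_num) (by norm_num) (by omega) (by omega)
      (by rintro (⟨h,h'⟩|⟨h,h'⟩|⟨h,h'⟩|⟨h,h'⟩|⟨h,h'⟩|⟨h,h'⟩|⟨h,h'⟩|⟨h,h'⟩|⟨h,h'⟩|⟨h,h'⟩|⟨t,ht2,ht3,(⟨h,h'⟩|⟨h,h'⟩)⟩) <;> omega)
    have C66 : χ (e 6) (e 6) = 0 := halt _
    have C67 : χ (e 6) (e 7) = 0 := hz 6 7 (by norm_num) (by norm_num) (by omega) (by omega)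
      (by rintro (⟨h,h'⟩|⟨h,h'⟩|⟨h,h'⟩|⟨h,h'⟩|⟨h,h'⟩|⟨h,h'⟩|⟨h,h'⟩|⟨h,h'⟩|⟨h,h'⟩|⟨h,h'⟩|⟨t,ht2,ht3,(⟨h,h'⟩|⟨h,h'⟩)⟩) <;> omega)
    have C68 : χ (e 6) (e 8) = 0 := hz 6 8 (by norm_num) (by norm_num) (by omega) (by omega)
      (by rintro (⟨h,h'⟩|⟨h,h'⟩|⟨h,h'⟩|⟨h,h'⟩|⟨h,h'⟩|⟨h,h'⟩|⟨h,h'⟩|⟨h,h'⟩|⟨h,h'⟩|⟨h,h'⟩|⟨t,ht2,ht3,(⟨h,h'⟩|⟨h,h'⟩)⟩) <;> omega)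
    have C71 : χ (e 7) (e 1) = 0 := hz 7 1 (by norm_num) (by norm_num) (by omega) (by omega)
      (by rintro (⟨h,h'⟩|⟨h,h'⟩|⟨h,h'⟩|⟨h,h'⟩|⟨h,h'⟩|⟨h,h'⟩|⟨h,h'⟩|⟨h,h'⟩|⟨h,h'⟩|⟨h,h'⟩|⟨t,ht2,ht3,(⟨h,h'⟩|⟨h,h'⟩)⟩) <;> omega)
    have C72 : χ (e 7) (e 2) = 0 := hz 7 2 (by norm_num) (by norm_num) (by omega) (by omega)
      (by rintro (⟨h,h'⟩|⟨h,h'⟩|⟨h,h'⟩|⟨h,h'⟩|⟨h,h'⟩|⟨h,h'⟩|⟨h,h'⟩|⟨h,h'⟩|⟨h,h'⟩|⟨h,h'⟩|⟨t,ht2,ht3,(⟨h,h'⟩|⟨h,h'⟩)⟩) <;> omega)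
    have C73 : χ (e 7) (e 3) = 0 := hz 7 3 (by norm_num) (by norm_num) (by omega) (by omega)
      (by rintro (⟨h,h'⟩|⟨h,h'⟩|⟨h,h'⟩|⟨h,h'⟩|⟨h,h'⟩|⟨h,h'⟩|⟨h,h'⟩|⟨h,h'⟩|⟨h,h'⟩|⟨h,h'⟩|⟨t,ht2,ht3,(⟨h,h'⟩|⟨h,h'⟩)⟩) <;> omega)
    have C74 : χ (e 7) (e 4) = 0 := hz 7 4 (by norm_num) (by norm_num) (by omega) (by omega)
      (by rintro (⟨h,h'⟩|⟨h,h'⟩|⟨h,h'⟩|⟨h,h'⟩|⟨h,h'⟩|⟨h,h'⟩|⟨h,h'⟩|⟨h,h'⟩|⟨h,h'⟩|⟨h,h'⟩|⟨t,ht2,ht3,(⟨h,h'⟩|⟨h,h'⟩)⟩) <;> omega)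
    have C75 : χ (e 7) (e 5) = 0 := hz 7 5 (by norm_num) (by norm_num) (by omega) (by omega)
      (by rintro (⟨h,h'⟩|⟨h,h'⟩|⟨h,h'⟩|⟨h,h'⟩|⟨h,h'⟩|⟨h,h'⟩|⟨h,h'⟩|⟨h,h'⟩|⟨h,h'⟩|⟨h,h'⟩|⟨t,ht2,ht3,(⟨h,h'⟩|⟨h,h'⟩)⟩) <;> omega)
    have C76 : χ (e 7) (e 6) = 0 := hz 7 6 (by norm_num) (by norm_num) (by omega) (by omega)
      (by rintro (⟨h,h'⟩|⟨h,h'⟩|⟨h,h'⟩|⟨h,h'⟩|⟨h,h'⟩|⟨h,h'⟩|⟨h,h'⟩|⟨h,h'⟩|⟨h,h'⟩|⟨h,h'⟩|⟨t,ht2,ht3,(⟨h,h'⟩|⟨h,h'⟩)⟩) <;> omega)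
    have C77 : χ (e 7) (e 7) = 0 := halt _
    have C78 : χ (e 7) (e 8) = 0 := hz 7 8 (by norm_num) (by norm_num) (by omega) (by omega)
      (by rintro (⟨h,h'⟩|⟨h,h'⟩|⟨h,h'⟩|⟨h,h'⟩|⟨h,h'⟩|⟨h,h'⟩|⟨h,h'⟩|⟨h,h'⟩|⟨h,h'⟩|⟨h,h'⟩|⟨t,ht2,ht3,(⟨h,h'⟩|⟨h,h'⟩)⟩) <;> omega)
    have C81 : χ (e 8) (e 1) = 0 := hz 8 1 (by norm_num) (by norm_num) (by omega) (by omega)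
      (by rintro (⟨h,h'⟩|⟨h,h'⟩|⟨h,h'⟩|⟨h,h'⟩|⟨h,h'⟩|⟨h,h'⟩|⟨h,h'⟩|⟨h,h'⟩|⟨h,h'⟩|⟨h,h'⟩|⟨t,ht2,ht3,(⟨h,h'⟩|⟨h,h'⟩)⟩) <;> omega)
    have C82 : χ (e 8) (e 2) = e 5 := h82
    have C83 : χ (e 8) (e 3) = e 6 := h83
    have C84 : χ (e 8) (e 4) = 0 := hz 8 4 (by norm_num) (by norm_num) (by omega) (by omega)
      (by rintro (⟨h,h'⟩|⟨h,h'⟩|⟨h,h'⟩|⟨h,h'⟩|⟨h,h'⟩|⟨h,h'⟩|⟨h,h'⟩|⟨h,h'⟩|⟨h,h'⟩|⟨h,h'⟩|⟨t,ht2,ht3,(⟨h,h'⟩|⟨h,h'⟩)⟩) <;> omega)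
    have C85 : χ (e 8) (e 5) = 0 := hz 8 5 (by norm_num) (by norm_num) (by omega) (by omega)
      (by rintro (⟨h,h'⟩|⟨h,h'⟩|⟨h,h'⟩|⟨h,h'⟩|⟨h,h'⟩|⟨h,h'⟩|⟨h,h'⟩|⟨h,h'⟩|⟨h,h'⟩|⟨h,h'⟩|⟨t,ht2,ht3,(⟨h,h'⟩|⟨h,h'⟩)⟩) <;> omega)
    have C86 : χ (e 8) (e 6) = 0 := hz 8 6 (by norm_num) (by norm_num) (by omega) (by omega)
      (by rintro (⟨h,h'⟩|⟨h,h'⟩|⟨h,h'⟩|⟨h,h'⟩|⟨h,h'⟩|⟨h,h'⟩|⟨h,h'⟩|⟨h,h'⟩|⟨h,h'⟩|⟨h,h'⟩|⟨t,ht2,ht3,(⟨h,h'⟩|⟨h,h'⟩)⟩) <;> omega)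
    have C87 : χ (e 8) (e 7) = 0 := hz 8 7 (by norm_num) (by norm_num) (by omega) (by omega)
      (by rintro (⟨h,h'⟩|⟨h,h'⟩|⟨h,h'⟩|⟨h,h'⟩|⟨h,h'⟩|⟨h,h'⟩|⟨h,h'⟩|⟨h,h'⟩|⟨h,h'⟩|⟨h,h'⟩|⟨t,ht2,ht3,(⟨h,h'⟩|⟨h,h'⟩)⟩) <;> omega)
    have C88 : χ (e 8) (e 8) = 0 := halt _
    clear hz hfam hL0 Lspan hCspan hVspan8 hVsmall hOuterE6 hOuterBig hanti hsk hbr hbr0 hspan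
    interval_cases a <;> interval_cases b <;> interval_cases c <;>
      simp only [L11, L12, L13, L14, L15, L16, L17, L18, L21, L22, L23, L24, L25, L26, L27, L28,
        L31, L32, L33, L34, L35, L36, L37, L38, L41, L42, L43, L44, L45, L46, L47, L48,
        L51, L52, L53, L54, L55, L56, L57, L58, L61, L62, L63, L64, L65, L66, L67, L68,
        L71, L72, L73, L74, L75, L76, L77, L78, L81, L82, L83, L84, L85, L86, L87, L88,
        C11, C12, C13, C14, C15, C16, C17, C18, C21, C22, C23, C24, C25, C26, C27, C28,
        C31, C32, C33, C34, C35, C36, C37, C38, C41, C42, C43, C44, C45, C46, C47, C48,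
        C51, C52, C53, C54, C55, C56, C57, C58, C61, C62, C63, C64, C65, C66, C67, C68,
        C71, C72, C73, C74, C75, C76, C77, C78, C81, C82, C83, C84, C85, C86, C87, C88,
        add_zero, zero_add, map_zero, map_neg, lie_zero, lie_neg, neg_zero, neg_neg,
        neg_add_cancel, add_neg_cancel] <;>
      abel
  intro x y z
  refine tri_aux' hspan (fun x y z =>
      (⁅x, ⁅y, z⁆ + χ y z⁆ + χ x (⁅y, z⁆ + χ y z)) +
      (⁅z, ⁅x, y⁆ + χ x y⁆ + χ z (⁅x, y⁆ + χ x y)) +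
      (⁅y, ⁅z, x⁆ + χ z x⁆ + χ y (⁅z, x⁆ + χ z x))) ?_ ?_ ?_ ?_ ?_ ?_ ?_ x y z
  · intro x x' y z
    simp only [add_lie, lie_add, map_add, LinearMap.add_apply]
    abel
  · intro c x y z
    simp only [smul_lie, lie_smul, map_smul, LinearMap.smul_apply, smul_add,
      add_lie, lie_add, map_add, LinearMap.add_apply]
  · intro x y y' z
    simp only [add_lie, lie_add, map_add, LinearMap.add_apply]
    abel
  · intro c x y z
    simp only [smul_lie, lie_smul, map_smul, LinearMap.smul_apply, smul_add,
      add_lie, lie_add, map_add, LinearMap.add_apply]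
  · intro x y z z'
    simp only [add_lie, lie_add, map_add, LinearMap.add_apply]
    abel
  · intro c x y z
    simp only [smul_lie, lie_smul, map_smul, LinearMap.smul_apply, smul_add,
      add_lie, lie_add, map_add, LinearMap.add_apply]
  · rintro x hx y hy z hz
    obtain ⟨ia, rfl⟩ := hx
    obtain ⟨ib, rfl⟩ := hy
    obtain ⟨ic, rfl⟩ := hz
    have hia := ia.isLt
    have hib := ib.isLt
    have hic := ic.isLt
    exact key _ _ _ (by omega) (by omega) (by omega) (by omega) (by omega) (by omega)




/-- with `g₀ⁿ` as in Statement 10 (basis `e 1, ..., e n`, `X_l = e l`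
for `1 ≤ l ≤ 6` and `Y_k = e (6+k)`):
(a) for `1 ≤ i < j ≤ n-6` the alternating map `ψ¹_{i,j}` with
`ψ¹_{i,j}(Y_i, Y_j) = X₆` (zero otherwise) is a `2`-cocycle;
(b) for `j ∈ {2,3,4}` and `1 ≤ i ≤ n-6` the map `ψ_i^j` with
`ψ_i^j (Y_i, X_l) = X_{l+j}` for `2 ≤ l ≤ 6-j` (zero otherwise) is a `2`-cocycle;
(c) for `n = 2m`, `m ≥ 5`, the deformed law
`g₀ⁿ + φ_{1,1} + φ_{3,2} + ψ₂³ + Σ_{t=2}^{m-3} ψ¹_{2t-1,2t}` satisfies the Jacobi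
identity, i.e. defines a Lie algebra law. -/
theorem stmt12 (n : ℕ) (hn : 7 ≤ n) (g : Type*) [LieRing g] [LieAlgebra ℂ g]
    (e : ℕ → g)
    (hindep : LinearIndependent ℂ (fun i : Fin n => e (i.1 + 1)))
    (hspan : Submodule.span ℂ (Set.range (fun i : Fin n => e (i.1 + 1))) = ⊤)
    (hbr : ∀ j, 2 ≤ j → j ≤ 5 → ⁅e 1, e j⁆ = e (j + 1))
    (hbr0 : ∀ i j, 1 ≤ i → i < j → j ≤ n → ¬(i = 1 ∧ 2 ≤ j ∧ j ≤ 5) → ⁅e i, e j⁆ = 0) :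
    -- (a) the maps ψ¹_{i,j} are 2-cocycles
    (∀ i j, 1 ≤ i → i < j → j ≤ n - 6 → ∀ ψ : g →ₗ[ℂ] g →ₗ[ℂ] g,
      (∀ x : g, ψ x x = 0) →
      ψ (e (6 + i)) (e (6 + j)) = e 6 →
      (∀ a b, 1 ≤ a → 1 ≤ b → a ≤ n → b ≤ n →
        ¬((a = 6 + i ∧ b = 6 + j) ∨ (a = 6 + j ∧ b = 6 + i)) →
        ψ (e a) (e b) = 0) →
      ∀ x y z : g,
        ⁅x, ψ y z⁆ + ⁅z, ψ x y⁆ + ⁅y, ψ z x⁆ +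
          ψ x ⁅y, z⁆ + ψ z ⁅x, y⁆ + ψ y ⁅z, x⁆ = 0) ∧
    -- (b) the maps ψ_i^j are 2-cocycles
    (∀ i j, 1 ≤ i → i ≤ n - 6 → j = 2 ∨ j = 3 ∨ j = 4 → ∀ ψ : g →ₗ[ℂ] g →ₗ[ℂ] g,
      (∀ x : g, ψ x x = 0) →
      (∀ l, 2 ≤ l → l ≤ 6 - j → ψ (e (6 + i)) (e l) = e (l + j)) →
      (∀ a b, 1 ≤ a → 1 ≤ b → a ≤ n → b ≤ n →
        ¬((a = 6 + i ∧ 2 ≤ b ∧ b ≤ 6 - j) ∨ (b = 6 + i ∧ 2 ≤ a ∧ a ≤ 6 - j)) →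
        ψ (e a) (e b) = 0) →
      ∀ x y z : g,
        ⁅x, ψ y z⁆ + ⁅z, ψ x y⁆ + ⁅y, ψ z x⁆ +
          ψ x ⁅y, z⁆ + ψ z ⁅x, y⁆ + ψ y ⁅z, x⁆ = 0) ∧
    -- (c) the deformed law g₀ⁿ + φ_{1,1} + φ_{3,2} + ψ₂³ + Σ_{t} ψ¹_{2t-1,2t}
    -- (for n = 2m, m ≥ 5) satisfies the Jacobi identity
    (∀ m, 5 ≤ m → n = 2 * m → ∀ χ : g →ₗ[ℂ] g →ₗ[ℂ] g,
      (∀ x : g, χ x x = 0) →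
      χ (e 5) (e 2) = e 7 →
      χ (e 3) (e 4) = e 7 →
      χ (e 3) (e 2) = e 8 →
      χ (e 8) (e 2) = e 5 →
      χ (e 8) (e 3) = e 6 →
      (∀ t, 2 ≤ t → t ≤ m - 3 → χ (e (2 * t + 5)) (e (2 * t + 6)) = e 6) →
      (∀ a b, 1 ≤ a → 1 ≤ b → a ≤ n → b ≤ n →
        ¬((a = 5 ∧ b = 2) ∨ (a = 2 ∧ b = 5) ∨ (a = 3 ∧ b = 4) ∨ (a = 4 ∧ b = 3) ∨
          (a = 3 ∧ b = 2) ∨ (a = 2 ∧ b = 3) ∨ (a = 8 ∧ b = 2) ∨ (a = 2 ∧ b = 8) ∨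
          (a = 8 ∧ b = 3) ∨ (a = 3 ∧ b = 8) ∨
          (∃ t, 2 ≤ t ∧ t ≤ m - 3 ∧
            ((a = 2 * t + 5 ∧ b = 2 * t + 6) ∨ (a = 2 * t + 6 ∧ b = 2 * t + 5)))) →
        χ (e a) (e b) = 0) →
      ∀ x y z : g,
        (⁅x, ⁅y, z⁆ + χ y z⁆ + χ x (⁅y, z⁆ + χ y z)) +
        (⁅z, ⁅x, y⁆ + χ x y⁆ + χ z (⁅x, y⁆ + χ x y)) +
        (⁅y, ⁅z, x⁆ + χ z x⁆ + χ y (⁅z, x⁆ + χ z x)) = 0) := by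
  exact ⟨partA n hn g e hspan hbr hbr0, partB n hn g e hspan hbr hbr0,
    partC n hn g e hspan hbr hbr0⟩
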